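/- For every integer k ≥ 4, the thin headless spider H_k satisfies γ^I(H_k) = k + 1. -/

import Mathlib

open Finset

namespace SepDom

variable {V : Type*} [Fintype V] [DecidableEq V]

/-- The closed neighborhood `N[v]` of a vertex as a `Finset`. -/
def closedNbhd (G : SimpleGraph V) [DecidableRel G.Adj] (v : V) : Finset V :=
  insert v (G.neighborFinset v)

/-- `C` is a dominating set: `N[v] ∩ C ≠ ∅` for all `v`. -/
def IsDomSet (G : SimpleGraph V) [DecidableRel G.Adj] (C : Finset V) : Prop :=
  ∀ v : V, (closedNbhd G v ∩ C).Nonempty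

/-- `C` is a total-dominating set: `N(v) ∩ C ≠ ∅` for all `v`. -/
def IsTotalDomSet (G : SimpleGraph V) [DecidableRel G.Adj] (C : Finset V) : Prop :=
  ∀ v : V, (G.neighborFinset v ∩ C).Nonempty

/-- `C` is a locating set (L-set): the sets `N(v) ∩ C`, `v ∉ C`, are pairwise distinct. -/
def IsLSet (G : SimpleGraph V) [DecidableRel G.Adj] (C : Finset V) : Prop :=
  ∀ u ∉ C, ∀ v ∉ C, G.neighborFinset u ∩ C = G.neighborFinset v ∩ C → u = v

/-- `C` is an open-separating set (O-set): the sets `N(v) ∩ C` are pairwise distinct. -/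
def IsOSet (G : SimpleGraph V) [DecidableRel G.Adj] (C : Finset V) : Prop :=
  ∀ u v : V, G.neighborFinset u ∩ C = G.neighborFinset v ∩ C → u = v

/-- `C` is a closed-separating set (I-set): the sets `N[v] ∩ C` are pairwise distinct. -/
def IsISet (G : SimpleGraph V) [DecidableRel G.Adj] (C : Finset V) : Prop :=
  ∀ u v : V, closedNbhd G u ∩ C = closedNbhd G v ∩ C → u = v

/-- `C` is a full-separating set (F-set): both open- and closed-separating. -/
def IsFSet (G : SimpleGraph V) [DecidableRel G.Adj] (C : Finset V) : Prop :=
  IsOSet G C ∧ IsISet G C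

/-- `G` has open twins: distinct non-adjacent vertices with equal open neighborhoods. -/
def HasOpenTwins (G : SimpleGraph V) [DecidableRel G.Adj] : Prop :=
  ∃ u v : V, u ≠ v ∧ ¬ G.Adj u v ∧ G.neighborFinset u = G.neighborFinset v

/-- `G` has closed twins: distinct adjacent vertices with equal closed neighborhoods. -/
def HasClosedTwins (G : SimpleGraph V) [DecidableRel G.Adj] : Prop :=
  ∃ u v : V, u ≠ v ∧ G.Adj u v ∧ closedNbhd G u = closedNbhd G v

/-- `G` has an isolated vertex: a vertex with empty open neighborhood. -/
def HasIsolated (G : SimpleGraph V) [DecidableRel G.Adj] : Prop :=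
  ∃ v : V, G.neighborFinset v = ∅

/-- The L-number: minimum cardinality of an L-set. -/
noncomputable def lNum (G : SimpleGraph V) [DecidableRel G.Adj] : ℕ :=
  sInf {n | ∃ C : Finset V, IsLSet G C ∧ C.card = n}

/-- The O-number: minimum cardinality of an O-set. -/
noncomputable def oNum (G : SimpleGraph V) [DecidableRel G.Adj] : ℕ :=
  sInf {n | ∃ C : Finset V, IsOSet G C ∧ C.card = n}

/-- The I-number: minimum cardinality of an I-set. -/
noncomputable def iNum (G : SimpleGraph V) [DecidableRel G.Adj] : ℕ :=
  sInf {n | ∃ C : Finset V, IsISet G C ∧ C.card = n}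

/-- The F-number: minimum cardinality of an F-set. -/
noncomputable def fNum (G : SimpleGraph V) [DecidableRel G.Adj] : ℕ :=
  sInf {n | ∃ C : Finset V, IsFSet G C ∧ C.card = n}

/-- The LD-number: minimum cardinality of an LD-code. -/
noncomputable def ldNum (G : SimpleGraph V) [DecidableRel G.Adj] : ℕ :=
  sInf {n | ∃ C : Finset V, IsDomSet G C ∧ IsLSet G C ∧ C.card = n}

/-- The OD-number: minimum cardinality of an OD-code. -/
noncomputable def odNum (G : SimpleGraph V) [DecidableRel G.Adj] : ℕ :=
  sInf {n | ∃ C : Finset V, IsDomSet G C ∧ IsOSet G C ∧ C.card = n}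

/-- The ID-number: minimum cardinality of an ID-code. -/
noncomputable def idNum (G : SimpleGraph V) [DecidableRel G.Adj] : ℕ :=
  sInf {n | ∃ C : Finset V, IsDomSet G C ∧ IsISet G C ∧ C.card = n}

/-- The FD-number: minimum cardinality of an FD-code. -/
noncomputable def fdNum (G : SimpleGraph V) [DecidableRel G.Adj] : ℕ :=
  sInf {n | ∃ C : Finset V, IsDomSet G C ∧ IsFSet G C ∧ C.card = n}

/-- The LTD-number: minimum cardinality of an LTD-code. -/
noncomputable def ltdNum (G : SimpleGraph V) [DecidableRel G.Adj] : ℕ :=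
  sInf {n | ∃ C : Finset V, IsTotalDomSet G C ∧ IsLSet G C ∧ C.card = n}

/-- The OTD-number: minimum cardinality of an OTD-code. -/
noncomputable def otdNum (G : SimpleGraph V) [DecidableRel G.Adj] : ℕ :=
  sInf {n | ∃ C : Finset V, IsTotalDomSet G C ∧ IsOSet G C ∧ C.card = n}

/-- The ITD-number: minimum cardinality of an ITD-code. -/
noncomputable def itdNum (G : SimpleGraph V) [DecidableRel G.Adj] : ℕ :=
  sInf {n | ∃ C : Finset V, IsTotalDomSet G C ∧ IsISet G C ∧ C.card = n}

/-- The FTD-number: minimum cardinality of an FTD-code. -/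
noncomputable def ftdNum (G : SimpleGraph V) [DecidableRel G.Adj] : ℕ :=
  sInf {n | ∃ C : Finset V, IsTotalDomSet G C ∧ IsFSet G C ∧ C.card = n}

end SepDom

open SepDom

/-- The thin headless spider `H_k`: vertices `Sum.inl i` form the clique `Q`,
vertices `Sum.inr i` form the stable set `S`, and `q_i` is adjacent to `s_j` iff `i = j`. -/
def thinSpider (k : ℕ) : SimpleGraph (Fin k ⊕ Fin k) where
  Adj u v :=
    match u, v with
    | Sum.inl i, Sum.inl j => i ≠ j
    | Sum.inl i, Sum.inr j => i = j
    | Sum.inr i, Sum.inl j => i = j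
    | Sum.inr _, Sum.inr _ => False
  symm := by
    constructor
    rintro (i | i) (j | j) h
    · exact Ne.symm h
    · exact Eq.symm h
    · exact Eq.symm h
    · exact h
  loopless := by
    constructor
    rintro (i | i) h
    · exact h rfl
    · exact h

instance thinSpider.adjDecidable (k : ℕ) : DecidableRel (thinSpider k).Adj := by
  rintro (i | i) (j | j)
  · exact inferInstanceAs (Decidable (i ≠ j))
  · exact inferInstanceAs (Decidable (i = j))
  · exact inferInstanceAs (Decidable (i = j))
  · exact inferInstanceAs (Decidable False)

section Aux

variable {k : ℕ}

lemma ts_mem_cn (v x : Fin k ⊕ Fin k) :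
    x ∈ closedNbhd (thinSpider k) v ↔ x = v ∨ (thinSpider k).Adj v x := by
  simp [closedNbhd]

lemma ts_cn_ll (i t : Fin k) : Sum.inl t ∈ closedNbhd (thinSpider k) (Sum.inl i) := by
  rw [ts_mem_cn]
  by_cases h : t = i
  · exact Or.inl (by rw [h])
  · exact Or.inr (fun e => h e.symm)

lemma ts_cn_lr (i t : Fin k) :
    Sum.inr t ∈ closedNbhd (thinSpider k) (Sum.inl i) ↔ t = i := by
  rw [ts_mem_cn]
  constructor
  · rintro (h | h)
    · exact absurd h (by simp)
    · exact h.symm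
  · intro h; exact Or.inr h.symm

lemma ts_cn_rl (i t : Fin k) :
    Sum.inl t ∈ closedNbhd (thinSpider k) (Sum.inr i) ↔ t = i := by
  rw [ts_mem_cn]
  constructor
  · rintro (h | h)
    · exact absurd h (by simp)
    · exact h.symm
  · intro h; exact Or.inr h.symm

lemma ts_cn_rr (i t : Fin k) :
    Sum.inr t ∈ closedNbhd (thinSpider k) (Sum.inr i) ↔ t = i := by
  rw [ts_mem_cn]
  constructor
  · rintro (h | h)
    · exact Sum.inr.inj h
    · exact h.elim
  · intro h; exact Or.inl (by rw [h])

/-- Lower bound: every I-set of the thin spider has at least `k+1` elements. -/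
lemma ts_lower (hk : 4 ≤ k) (C : Finset (Fin k ⊕ Fin k))
    (hC : IsISet (thinSpider k) C) : k + 1 ≤ C.card := by
  classical
  set T : Finset (Fin k) := univ.filter (fun i => (Sum.inr i : Fin k ⊕ Fin k) ∈ C) with hT
  set QT : Finset (Fin k) := univ.filter (fun i => (Sum.inl i : Fin k ⊕ Fin k) ∈ C) with hQT
  -- Step A : at most one s_i is missing from C
  have hmiss : (univ.filter (fun i => (Sum.inr i : Fin k ⊕ Fin k) ∉ C)).card ≤ 1 := by
    rw [Finset.card_le_one]
    intro a ha b hb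
    simp only [Finset.mem_filter] at ha hb
    by_contra hab
    have heq : closedNbhd (thinSpider k) (Sum.inl a) ∩ C
        = closedNbhd (thinSpider k) (Sum.inl b) ∩ C := by
      ext x
      rcases x with t | t
      · simp [Finset.mem_inter, ts_cn_ll]
      · simp only [Finset.mem_inter, ts_cn_lr]
        constructor
        · rintro ⟨rfl, hc⟩; exact absurd hc ha.2
        · rintro ⟨rfl, hc⟩; exact absurd hc hb.2
    have := hC _ _ heq
    exact hab (Sum.inl.inj this)
  have hTcard : k - 1 ≤ T.card := by
    have h := Finset.card_filter_add_card_filter_not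
      (s := (univ : Finset (Fin k)))
      (p := fun i => (Sum.inr i : Fin k ⊕ Fin k) ∈ C)
    simp only [Finset.card_univ, Fintype.card_fin] at h
    have hfold : (univ.filter (fun i => (Sum.inr i : Fin k ⊕ Fin k) ∈ C)).card = T.card := by
      rw [hT]
    omega
  -- Step B : for each i there is t ≠ i with q_t ∈ C
  have hstep : ∀ i : Fin k, ∃ t : Fin k, t ≠ i ∧ (Sum.inl t : Fin k ⊕ Fin k) ∈ C := by
    intro i
    by_contra hno
    push_neg at hno
    have heq : closedNbhd (thinSpider k) (Sum.inl i) ∩ C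
        = closedNbhd (thinSpider k) (Sum.inr i) ∩ C := by
      ext x
      rcases x with t | t
      · simp only [Finset.mem_inter, ts_cn_rl]
        constructor
        · rintro ⟨_, hc⟩
          by_cases hti : t = i
          · exact ⟨hti, hc⟩
          · exact absurd hc (hno t hti)
        · rintro ⟨rfl, hc⟩; exact ⟨ts_cn_ll _ _, hc⟩
      · simp [Finset.mem_inter, ts_cn_lr, ts_cn_rr]
    exact absurd (hC _ _ heq) (by simp)
  obtain ⟨a, _, ha⟩ := hstep ⟨0, by omega⟩
  obtain ⟨b, hba, hb⟩ := hstep a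
  have hQTcard : 2 ≤ QT.card := by
    have hsub : ({a, b} : Finset (Fin k)) ⊆ QT := by
      intro x hx
      simp only [Finset.mem_insert, Finset.mem_singleton] at hx
      rcases hx with rfl | rfl <;> simp [hQT, ha, hb]
    calc 2 = ({a, b} : Finset (Fin k)).card := by
            rw [Finset.card_insert_of_notMem (by simp [hba.symm]), Finset.card_singleton]
      _ ≤ QT.card := Finset.card_le_card hsub
  -- Step C : combine
  have hsub : QT.image Sum.inl ∪ T.image Sum.inr ⊆ C := by
    intro x hx
    simp only [Finset.mem_union, Finset.mem_image, hQT, hT, Finset.mem_filter] at hx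
    rcases hx with ⟨t, ⟨_, ht⟩, rfl⟩ | ⟨t, ⟨_, ht⟩, rfl⟩ <;> exact ht
  have hdisj : Disjoint (QT.image Sum.inl) (T.image Sum.inr) := by
    rw [Finset.disjoint_left]
    rintro x hx hx'
    simp only [Finset.mem_image] at hx hx'
    obtain ⟨t, _, rfl⟩ := hx
    obtain ⟨t', _, h⟩ := hx'
    exact absurd h (by simp)
  have hcard : QT.card + T.card ≤ C.card := by
    have h1 := Finset.card_le_card hsub
    rw [Finset.card_union_of_disjoint hdisj,
      Finset.card_image_of_injective _ Sum.inl_injective,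
      Finset.card_image_of_injective _ Sum.inr_injective] at h1
    exact h1
  omega

end Aux

theorem thinSpider_iNum (k : ℕ) (hk : 4 ≤ k) :
    iNum (thinSpider k) = k + 1 := by
  classical
  set a0 : Fin k := ⟨0, by omega⟩ with ha0
  set a1 : Fin k := ⟨1, by omega⟩ with ha1
  have h01 : a0 ≠ a1 := by simp [ha0, ha1, Fin.ext_iff]
  set C : Finset (Fin k ⊕ Fin k) :=
    ({a0, a1} : Finset (Fin k)).disjSum ((univ : Finset (Fin k)) \ {a0}) with hCdef
  have hmemL : ∀ i : Fin k, (Sum.inl i : Fin k ⊕ Fin k) ∈ C ↔ (i = a0 ∨ i = a1) := by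
    intro i; simp [hCdef]
  have hmemR : ∀ i : Fin k, (Sum.inr i : Fin k ⊕ Fin k) ∈ C ↔ i ≠ a0 := by
    intro i; simp [hCdef]
  have hcard : C.card = k + 1 := by
    rw [hCdef, Finset.card_disjSum, Finset.card_insert_of_notMem (by simp [h01]),
      Finset.card_singleton, Finset.card_sdiff_of_subset (by simp), Finset.card_univ,
      Fintype.card_fin, Finset.card_singleton]
    omega
  have hC : IsISet (thinSpider k) C := by
    intro u v h
    have H := fun x => Finset.ext_iff.mp h x
    rcases u with i | i <;> rcases v with j | j
    · -- inl / inl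
      by_contra hne
      have hij : i ≠ j := fun e => hne (by rw [e])
      by_cases hi0 : i = a0
      · have hj0 : j ≠ a0 := by rw [hi0] at hij; exact fun e => hij e.symm
        have hmem : Sum.inr j ∈ closedNbhd (thinSpider k) (Sum.inl j) ∩ C := by
          rw [Finset.mem_inter, ts_cn_lr, hmemR]; exact ⟨rfl, hj0⟩
        rw [← H (Sum.inr j), Finset.mem_inter, ts_cn_lr] at hmem
        exact hij hmem.1.symm
      · have hmem : Sum.inr i ∈ closedNbhd (thinSpider k) (Sum.inl i) ∩ C := by
          rw [Finset.mem_inter, ts_cn_lr, hmemR]; exact ⟨rfl, hi0⟩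
        rw [H (Sum.inr i), Finset.mem_inter, ts_cn_lr] at hmem
        exact hij hmem.1
    · -- inl / inr : contradiction
      exfalso
      by_cases hj0 : j = a0
      · have hmem : Sum.inl a1 ∈ closedNbhd (thinSpider k) (Sum.inl i) ∩ C := by
          rw [Finset.mem_inter, hmemL]; exact ⟨ts_cn_ll _ _, Or.inr rfl⟩
        rw [H (Sum.inl a1), Finset.mem_inter, ts_cn_rl] at hmem
        exact h01 (by rw [hmem.1, hj0])
      · have hmem : Sum.inl a0 ∈ closedNbhd (thinSpider k) (Sum.inl i) ∩ C := by
          rw [Finset.mem_inter, hmemL]; exact ⟨ts_cn_ll _ _, Or.inl rfl⟩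
        rw [H (Sum.inl a0), Finset.mem_inter, ts_cn_rl] at hmem
        exact hj0 hmem.1.symm
    · -- inr / inl : contradiction
      exfalso
      by_cases hi0 : i = a0
      · have hmem : Sum.inl a1 ∈ closedNbhd (thinSpider k) (Sum.inl j) ∩ C := by
          rw [Finset.mem_inter, hmemL]; exact ⟨ts_cn_ll _ _, Or.inr rfl⟩
        rw [← H (Sum.inl a1), Finset.mem_inter, ts_cn_rl] at hmem
        exact h01 (by rw [hmem.1, hi0])
      · have hmem : Sum.inl a0 ∈ closedNbhd (thinSpider k) (Sum.inl j) ∩ C := by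
          rw [Finset.mem_inter, hmemL]; exact ⟨ts_cn_ll _ _, Or.inl rfl⟩
        rw [← H (Sum.inl a0), Finset.mem_inter, ts_cn_rl] at hmem
        exact hi0 hmem.1.symm
    · -- inr / inr
      by_contra hne
      have hij : i ≠ j := fun e => hne (by rw [e])
      by_cases hi0 : i = a0
      · have hj0 : j ≠ a0 := by rw [hi0] at hij; exact fun e => hij e.symm
        have hmem : Sum.inr j ∈ closedNbhd (thinSpider k) (Sum.inr j) ∩ C := by
          rw [Finset.mem_inter, ts_cn_rr, hmemR]; exact ⟨rfl, hj0⟩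
        rw [← H (Sum.inr j), Finset.mem_inter, ts_cn_rr] at hmem
        exact hij hmem.1.symm
      · have hmem : Sum.inr i ∈ closedNbhd (thinSpider k) (Sum.inr i) ∩ C := by
          rw [Finset.mem_inter, ts_cn_rr, hmemR]; exact ⟨rfl, hi0⟩
        rw [H (Sum.inr i), Finset.mem_inter, ts_cn_rr] at hmem
        exact hij hmem.1
  have hmem : k + 1 ∈ {n | ∃ D : Finset (Fin k ⊕ Fin k),
      IsISet (thinSpider k) D ∧ D.card = n} := ⟨C, hC, hcard⟩
  refine le_antisymm (Nat.sInf_le hmem) (le_csInf ⟨_, hmem⟩ ?_)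
  rintro n ⟨D, hD, rfl⟩
  exact ts_lower hk D hD
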